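/- Let G₀ be a digraph, let e₁ = (u₁,v₁), ..., e_k = (u_k,v_k) be a sequence of inserted edges, and let E⁺_l = {e₁,...,e_l}. For vertices u,v, let l_{u,v} be the minimal l ∈ {0,...,k} such that a u → v path exists in G₀ ∪ E⁺_l (∞ if none). Define paths P_{u,v} inductively: if l_{u,v} = 0, P_{u,v} is a fixed simple u → v path in G₀; otherwise, for l = l_{u,v}, P_{u,v} = P_{u,u_l} · e_l · P_{v_l,v}. Then for all u,v with l_{u,v} < ∞, the path P_{u,v} is simple. -/

import Mathlib

/-- `p` is a walk in `E` from `a` to `b` (as its full list of vertices). -/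
def IsWalkList {V : Type*} (E : V → V → Prop) (p : List V) (a b : V) : Prop :=
  p.head? = some a ∧ p.getLast? = some b ∧ List.Chain' E p

/-- with `El l` the graph `G₀` plus the first `l` inserted edges
`(eu i, ev i)` (edge number `i+1` for `i : Fin k`), `lfun u v` the minimal `l` such that
`El l` contains a `u → v` path (when one exists for some `l ≤ k`), and paths `P u v`
defined inductively — a fixed simple `G₀`-path when `lfun u v = 0`, and
`P u (eu i) · (eu i, ev i) · P (ev i) v` where `i + 1 = lfun u v` otherwise — every
defined path `P u v` is simple. -/
theorem inductive_paths_simple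
    {V : Type*} (E0 : V → V → Prop) (k : ℕ) (eu ev : Fin k → V)
    (El : ℕ → V → V → Prop)
    (hEl : ∀ (l : ℕ) (x y : V), El l x y ↔
      (E0 x y ∨ ∃ i : Fin k, (i : ℕ) < l ∧ eu i = x ∧ ev i = y))
    (lfun : V → V → ℕ)
    (hlmin : ∀ u v, (∃ l ≤ k, Relation.ReflTransGen (El l) u v) →
      (lfun u v ≤ k ∧ Relation.ReflTransGen (El (lfun u v)) u v ∧
       ∀ l', Relation.ReflTransGen (El l') u v → lfun u v ≤ l'))
    (P : V → V → List V)
    (hbase : ∀ u v, (∃ l ≤ k, Relation.ReflTransGen (El l) u v) → lfun u v = 0 →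
      IsWalkList E0 (P u v) u v ∧ (P u v).Nodup)
    (hind : ∀ u v, (∃ l ≤ k, Relation.ReflTransGen (El l) u v) → 1 ≤ lfun u v →
      ∃ i : Fin k, (i : ℕ) + 1 = lfun u v ∧ P u v = P u (eu i) ++ P (ev i) v) :
    ∀ u v, (∃ l ≤ k, Relation.ReflTransGen (El l) u v) → (P u v).Nodup := by
  have mono : ∀ {l l' : ℕ}, l ≤ l' → ∀ {x y : V}, El l x y → El l' x y := by
    intro l l' hll x y h
    rw [hEl] at h ⊢
    rcases h with h | ⟨i, hi, h1, h2⟩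
    · exact Or.inl h
    · exact Or.inr ⟨i, lt_of_lt_of_le hi hll, h1, h2⟩
  have bad : ∀ (i : Fin k) {x y : V}, El ((i : ℕ) + 1) x y → ¬ El (i : ℕ) x y →
      eu i = x ∧ ev i = y := by
    intro i x y h hn
    rw [hEl] at h hn
    push_neg at hn
    rcases h with h | ⟨j, hj, h1, h2⟩
    · exact absurd h hn.1
    · have hji : (j : ℕ) = (i : ℕ) := by
        by_contra hne
        exact hn.2 j (by omega) h1 h2
      have : j = i := Fin.ext hji
      subst this; exact ⟨h1, h2⟩
  have splitL : ∀ (i : Fin k) (u v : V), Relation.ReflTransGen (El ((i : ℕ) + 1)) u v →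
      Relation.ReflTransGen (El i) u v ∨ Relation.ReflTransGen (El i) u (eu i) := by
    intro i u v h
    induction h with
    | refl => exact Or.inl .refl
    | @tail b c hab hbc ih =>
      rcases ih with ih | ih
      · by_cases hb : El (i : ℕ) b c
        · exact Or.inl (ih.tail hb)
        · exact Or.inr (by rw [(bad i hbc hb).1]; exact ih)
      · exact Or.inr ih
  have splitR : ∀ (i : Fin k) (u v : V), Relation.ReflTransGen (El ((i : ℕ) + 1)) u v →
      Relation.ReflTransGen (El i) u v ∨ Relation.ReflTransGen (El i) (ev i) v := by
    intro i u v h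
    induction h using Relation.ReflTransGen.head_induction_on with
    | refl => exact Or.inl .refl
    | @head a b hab hbv ih =>
      rcases ih with ih | ih
      · by_cases ha : El (i : ℕ) a b
        · exact Or.inl (ih.head ha)
        · exact Or.inr (by rw [(bad i hab ha).2]; exact ih)
      · exact Or.inr ih
  have chainRTG : ∀ {l : ℕ} (p : List V) (a b : V), List.Chain' (El l) p →
      p.head? = some a → p.getLast? = some b → Relation.ReflTransGen (El l) a b := by
    intro l p
    induction p with
    | nil => intro a b _ h _; simp at h
    | cons x q ih =>
      intro a b hc hh hl
      simp only [List.head?_cons, Option.some.injEq] at hh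
      subst hh
      cases q with
      | nil =>
        simp only [List.getLast?_singleton, Option.some.injEq] at hl
        subst hl; exact .refl
      | cons y q' =>
        replace hc := List.isChain_cons_cons.mp hc
        rw [List.getLast?_cons_cons] at hl
        exact Relation.ReflTransGen.head hc.1 (ih y b hc.2 rfl hl)
  have walkMem : ∀ {l : ℕ} {p : List V} {a b w : V}, IsWalkList (El l) p a b → w ∈ p →
      Relation.ReflTransGen (El l) a w ∧ Relation.ReflTransGen (El l) w b := by
    intro l p a b w hW hw
    obtain ⟨hh, hl, hc⟩ := hW
    obtain ⟨s, t, rfl⟩ := List.append_of_mem hw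
    constructor
    · apply chainRTG (s ++ [w]) a w
      · exact hc.prefix ⟨t, by simp⟩
      · cases s with
        | nil => simpa using hh
        | cons x s' =>
          simp only [List.cons_append, List.head?_cons] at hh ⊢
          exact hh
      · rw [List.getLast?_append_cons]; rfl
    · apply chainRTG (w :: t) w b
      · exact hc.suffix ⟨s, rfl⟩
      · rfl
      · rwa [List.getLast?_append_cons] at hl
  have main : ∀ n u v, (∃ l ≤ k, Relation.ReflTransGen (El l) u v) → lfun u v = n →
      IsWalkList (El n) (P u v) u v ∧ (P u v).Nodup := by
    intro n
    induction n using Nat.strong_induction_on with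
    | _ n IH =>
      intro u v hr hn
      rcases Nat.eq_zero_or_pos n with h0 | hpos
      · subst h0
        obtain ⟨⟨hh, hl, hc⟩, hnd⟩ := hbase u v hr hn
        exact ⟨⟨hh, hl, hc.imp (fun a b h => (hEl 0 _ _).mpr (Or.inl h))⟩, hnd⟩
      · obtain ⟨i, hi1, heq⟩ := hind u v hr (by omega)
        obtain ⟨hk', hrt, hmin⟩ := hlmin u v hr
        have hik : (i : ℕ) ≤ k := le_of_lt i.2
        have hni : n = (i : ℕ) + 1 := by omega
        have hnot : ¬ Relation.ReflTransGen (El i) u v := fun h => by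
          have := hmin i h; omega
        have hrt' : Relation.ReflTransGen (El ((i : ℕ) + 1)) u v := by
          rwa [hn, hni] at hrt
        have h1 : Relation.ReflTransGen (El i) u (eu i) :=
          (splitL i u v hrt').resolve_left hnot
        have h2 : Relation.ReflTransGen (El i) (ev i) v :=
          (splitR i u v hrt').resolve_left hnot
        have hr1 : ∃ l ≤ k, Relation.ReflTransGen (El l) u (eu i) := ⟨i, hik, h1⟩
        have hr2 : ∃ l ≤ k, Relation.ReflTransGen (El l) (ev i) v := ⟨i, hik, h2⟩
        have hl1 : lfun u (eu i) ≤ i := (hlmin u (eu i) hr1).2.2 i h1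
        have hl2 : lfun (ev i) v ≤ i := (hlmin (ev i) v hr2).2.2 i h2
        obtain ⟨W1, nd1⟩ := IH (lfun u (eu i)) (by omega) u (eu i) hr1 rfl
        obtain ⟨W2, nd2⟩ := IH (lfun (ev i) v) (by omega) (ev i) v hr2 rfl
        have W1' : IsWalkList (El i) (P u (eu i)) u (eu i) :=
          ⟨W1.1, W1.2.1, W1.2.2.imp (fun a b h => mono hl1 h)⟩
        have W2' : IsWalkList (El i) (P (ev i) v) (ev i) v :=
          ⟨W2.1, W2.2.1, W2.2.2.imp (fun a b h => mono hl2 h)⟩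
        have disj : (P u (eu i)).Disjoint (P (ev i) v) := by
          intro w hw1 hw2
          exact hnot ((walkMem W1' hw1).1.trans (walkMem W2' hw2).2)
        have hedge : El ((i : ℕ) + 1) (eu i) (ev i) :=
          (hEl _ _ _).mpr (Or.inr ⟨i, Nat.lt_succ_self _, rfl, rfl⟩)
        constructor
        · rw [hni, heq]
          refine ⟨?_, ?_, ?_⟩
          · have := W1'.1
            cases hp : P u (eu i) with
            | nil => rw [hp] at this; simp at this
            | cons x q => rw [hp] at this; simpa using this
          · have h2' := W2'.2.1
            cases hp : P (ev i) v with
            | nil => rw [hp] at h2'; simp at h2'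
            | cons x q =>
              rw [hp] at h2'
              rw [List.getLast?_append_cons]
              exact h2'
          · refine List.IsChain.append
              (W1'.2.2.imp (fun a b h => mono (Nat.le_succ _) h))
              (W2'.2.2.imp (fun a b h => mono (Nat.le_succ _) h)) ?_
            intro x hx y hy
            rw [W1'.2.1] at hx
            rw [W2'.1] at hy
            simp only [Option.mem_def, Option.some.injEq] at hx hy
            subst hx; subst hy
            exact hedge
        · rw [heq]
          exact nd1.append nd2 disj
  intro u v h
  exact (main (lfun u v) u v h rfl).2
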